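/- For every real τ ≥ 0, the double integral ∫_0^∞ ( ∫_{x₂}^∞ (1/2) · exp(−x₁/2) dx₁ ) · (1/2) · exp(−(x₂+τ)/2) · ( ∑_{k=0}^∞ ( (τ·x₂/4)^k / (k!)² ) ) dx₂ equals (1/2) · exp(−τ/4). -/

import Mathlib

open Real MeasureTheory

lemma aux_integrable (k : ℕ) :
    IntegrableOn (fun x : ℝ => x ^ k * Real.exp (-x)) (Set.Ioi 0) := by
  have h := Real.GammaIntegral_convergent (s := (k : ℝ) + 1) (by positivity)
  refine h.congr_fun (fun x hx => ?_) measurableSet_Ioi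
  rw [add_sub_cancel_right]; simp only [Real.rpow_natCast]
  ring

lemma aux_integral (k : ℕ) :
    ∫ x in Set.Ioi (0 : ℝ), x ^ k * Real.exp (-x) = (Nat.factorial k : ℝ) := by
  rw [← Real.Gamma_nat_eq_factorial k, Real.Gamma_eq_integral (by positivity)]
  refine setIntegral_congr_fun measurableSet_Ioi (fun x hx => ?_)
  rw [add_sub_cancel_right, Real.rpow_natCast]
  ring

lemma aux_inner (a : ℝ) :
    ∫ x in Set.Ioi a, (1 / 2 : ℝ) * Real.exp (-x / 2) = Real.exp (-a / 2) := by
  have hint : IntegrableOn (fun x : ℝ => (1 / 2 : ℝ) * Real.exp (-x / 2)) (Set.Ioi a) := by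
    have := (exp_neg_integrableOn_Ioi a (b := (1:ℝ)/2) (by norm_num)).const_mul (1/2 : ℝ)
    refine (IntegrableOn.congr_fun this (fun x _ => ?_) measurableSet_Ioi : _)
    ring_nf
  have hderiv : ∀ x ∈ Set.Ici a,
      HasDerivAt (fun y : ℝ => -Real.exp (-y / 2)) ((1 / 2 : ℝ) * Real.exp (-x / 2)) x := by
    intro x _
    have h1 : HasDerivAt (fun y : ℝ => -y / 2) (-(1/2 : ℝ)) x := by
      have := ((hasDerivAt_id x).neg.div_const 2)
      norm_num at this ⊢
      convert this using 1
    have := (h1.exp).fun_neg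
    exact this.congr_deriv (by ring)
  have htend : Filter.Tendsto (fun y : ℝ => -Real.exp (-y / 2)) Filter.atTop (nhds 0) := by
    rw [← neg_zero]
    refine Filter.Tendsto.neg ?_
    have : Filter.Tendsto (fun y : ℝ => -y / 2) Filter.atTop Filter.atBot := by
      apply Filter.Tendsto.atBot_div_const (by norm_num)
      exact Filter.tendsto_neg_atBot_iff.mpr Filter.tendsto_id
    exact Real.tendsto_exp_atBot.comp this
  have := MeasureTheory.integral_Ioi_of_hasDerivAt_of_tendsto' hderiv hint htend
  rw [this]
  ring


/-- Eq. (23) of the paper: for every `τ ≥ 0`, the double integral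
`∫_0^∞ (∫_{x₂}^∞ (1/2)·exp(−x₁/2) dx₁) · (1/2)·exp(−(x₂+τ)/2)·(∑_{k=0}^∞ (τx₂/4)^k/(k!)²) dx₂`
equals `(1/2)·exp(−τ/4)`. -/
theorem chi_sq_comparison_double_integral (τ : ℝ) (hτ : 0 ≤ τ) :
    ∫ x₂ in Set.Ioi (0 : ℝ),
        (∫ x₁ in Set.Ioi x₂, (1 / 2) * Real.exp (-x₁ / 2)) *
          ((1 / 2) * Real.exp (-(x₂ + τ) / 2) *
            (∑' k : ℕ, (τ * x₂ / 4) ^ k / ((Nat.factorial k : ℝ)) ^ 2))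
      = (1 / 2) * Real.exp (-τ / 4) := by
  set c : ℕ → ℝ := fun k => 1 / 2 * Real.exp (-τ / 2) * (τ / 4) ^ k / (Nat.factorial k : ℝ) ^ 2
    with hc
  have hc0 : ∀ k, 0 ≤ c k := by
    intro k
    rw [hc]
    positivity
  have key : ∀ x ∈ Set.Ioi (0 : ℝ),
      (∫ x₁ in Set.Ioi x, (1 / 2) * Real.exp (-x₁ / 2)) *
          ((1 / 2) * Real.exp (-(x + τ) / 2) *
            (∑' k : ℕ, (τ * x / 4) ^ k / ((Nat.factorial k : ℝ)) ^ 2))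
        = ∑' k : ℕ, c k * (x ^ k * Real.exp (-x)) := by
    intro x _
    rw [aux_inner x, show Real.exp (-x / 2) *
        ((1 / 2) * Real.exp (-(x + τ) / 2) *
          (∑' k : ℕ, (τ * x / 4) ^ k / ((Nat.factorial k : ℝ)) ^ 2))
      = (Real.exp (-x / 2) * ((1 / 2) * Real.exp (-(x + τ) / 2))) *
          (∑' k : ℕ, (τ * x / 4) ^ k / ((Nat.factorial k : ℝ)) ^ 2) from by ring,
      ← tsum_mul_left]
    refine tsum_congr fun k => ?_
    have e1 : Real.exp (-x / 2) * Real.exp (-(x + τ) / 2) = Real.exp (-τ / 2) * Real.exp (-x) := by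
      rw [← Real.exp_add, ← Real.exp_add]; congr 1; ring
    have e2 : (τ * x / 4) ^ k = (τ / 4) ^ k * x ^ k := by rw [← mul_pow]; congr 1; ring
    rw [hc, e2]
    linear_combination ((τ / 4) ^ k * x ^ k / (Nat.factorial k : ℝ) ^ 2 / 2) * e1
  rw [setIntegral_congr_fun measurableSet_Ioi key]
  have hInt : ∀ k : ℕ, Integrable (fun x : ℝ => c k * (x ^ k * Real.exp (-x)))
      (volume.restrict (Set.Ioi 0)) := fun k => (aux_integrable k).const_mul (c k)
  have hval : ∀ k : ℕ, (∫ x in Set.Ioi (0:ℝ), c k * (x ^ k * Real.exp (-x)))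
      = c k * (Nat.factorial k : ℝ) := by
    intro k
    rw [integral_const_mul, aux_integral]
  have hnorm : ∀ k : ℕ, (∫ x in Set.Ioi (0:ℝ), ‖c k * (x ^ k * Real.exp (-x))‖)
      = c k * (Nat.factorial k : ℝ) := by
    intro k
    rw [← hval k]
    refine setIntegral_congr_fun measurableSet_Ioi fun x hx => ?_
    have hx' : (0:ℝ) ≤ x := le_of_lt hx
    rw [Real.norm_eq_abs, abs_of_nonneg (by positivity)]
  have hSum : Summable fun k : ℕ => (∫ x in Set.Ioi (0:ℝ), ‖c k * (x ^ k * Real.exp (-x))‖) := by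
    refine Summable.congr (f := fun k : ℕ => (1 / 2 * Real.exp (-τ / 2)) * ((τ / 4) ^ k / (Nat.factorial k : ℝ))) ?_ fun k => ?_
    · exact (Real.summable_pow_div_factorial (τ / 4)).mul_left _
    · rw [hnorm k, hc]
      have hfac : (0:ℝ) < (Nat.factorial k : ℝ) := by positivity
      field_simp
  rw [← MeasureTheory.integral_tsum_of_summable_integral_norm hInt hSum]
  have : ∀ k : ℕ, (∫ x in Set.Ioi (0:ℝ), c k * (x ^ k * Real.exp (-x)))
      = (1 / 2 * Real.exp (-τ / 2)) * ((τ / 4) ^ k / (Nat.factorial k : ℝ)) := by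
    intro k
    rw [hval k, hc]
    have hfac : (0:ℝ) < (Nat.factorial k : ℝ) := by positivity
    field_simp
  rw [tsum_congr this, tsum_mul_left]
  have hexp : (∑' k : ℕ, (τ / 4) ^ k / (Nat.factorial k : ℝ)) = Real.exp (τ / 4) := by
    rw [Real.exp_eq_exp_ℝ, NormedSpace.exp_eq_tsum_div]
  rw [hexp, mul_assoc, ← Real.exp_add]
  congr 2
  ring
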